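/- Let m ∈ (1,2] and assume U satisfies A2(m)(i) and A2(m)(ii). Then there exist R₀ ≥ 0 and δ, η > 0 such that for all q, x, z ∈ ℝ^d with ‖q‖ ≥ R₀ and max(‖q−x‖, ‖q−z‖) ≤ δ‖q‖: D²U(q){∇U(x) ⊗ ∇U(z)} ≥ η‖q‖^{3m−4}. -/

import Mathlib

open Real
open scoped RealInnerProductSpace
noncomputable section

variable {d : ℕ}
local notation "E" => EuclideanSpace ℝ (Fin d)

lemma upd0 (a b c : E) : Function.update ![a, b] 0 c = ![c, b] := by
  funext i; fin_cases i <;> simp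

lemma upd1 (a b c : E) : Function.update ![a, b] 1 c = ![a, c] := by
  funext i; fin_cases i <;> simp

lemma bilin_expand (B : ContinuousMultilinearMap ℝ (fun _ : Fin 2 => E) ℝ) (g u v : E) :
    B ![g + u, g + v] = B ![g, g] + B ![g, v] + B ![u, g] + B ![u, v] := by
  have h1 : B ![g + u, g + v] = B ![g, g + v] + B ![u, g + v] := by
    have := B.map_update_add ![g, g + v] 0 g u
    simpa [upd0] using this
  have h2 : B ![g, g + v] = B ![g, g] + B ![g, v] := by
    have := B.map_update_add ![g, g] 1 g v
    simpa [upd1] using this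
  have h3 : B ![u, g + v] = B ![u, g] + B ![u, v] := by
    have := B.map_update_add ![u, g] 1 g v
    simpa [upd1] using this
  rw [h1, h2, h3]; ring

lemma bilin_bound (B : ContinuousMultilinearMap ℝ (fun _ : Fin 2 => E) ℝ) (u v : E) :
    |B ![u, v]| ≤ ‖B‖ * (‖u‖ * ‖v‖) := by
  have := B.le_opNorm ![u, v]
  simpa [Fin.prod_univ_two, mul_assoc] using this

lemma grad_lip (U : E → ℝ) (hU : ContDiff ℝ 3 U) {s : Set E} (hs : Convex ℝ s)
    {C : ℝ} (hC : ∀ w ∈ s, ‖iteratedFDeriv ℝ 2 U w‖ ≤ C)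
    {x y : E} (hx : x ∈ s) (hy : y ∈ s) :
    ‖gradient U x - gradient U y‖ ≤ C * ‖x - y‖ := by
  have hdiff : ∀ w ∈ s, DifferentiableAt ℝ (iteratedFDeriv ℝ 1 U) w := by
    intro w _
    exact (hU.differentiable_iteratedFDeriv (by norm_num)).differentiableAt
  have hbound : ∀ w ∈ s, ‖fderiv ℝ (iteratedFDeriv ℝ 1 U) w‖ ≤ C := by
    intro w hw
    rw [norm_fderiv_iteratedFDeriv]
    exact hC w hw
  have key := hs.norm_image_sub_le_of_norm_fderiv_le hdiff hbound hy hx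
  have h1 : ∀ z : E, iteratedFDeriv ℝ 1 U z
      = (continuousMultilinearCurryFin1 ℝ E ℝ).symm (fderiv ℝ U z) := by
    intro z; ext m; simp
  have h2 : ‖gradient U x - gradient U y‖ = ‖fderiv ℝ U x - fderiv ℝ U y‖ := by
    rw [gradient, gradient, ← LinearIsometryEquiv.map_sub, LinearIsometryEquiv.norm_map]
  rw [h2]
  calc ‖fderiv ℝ U x - fderiv ℝ U y‖
      = ‖iteratedFDeriv ℝ 1 U x - iteratedFDeriv ℝ 1 U y‖ := by
        rw [h1, h1, ← LinearIsometryEquiv.map_sub, LinearIsometryEquiv.norm_map]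
    _ ≤ C * ‖x - y‖ := key

lemma grad_growth (U : E → ℝ) (hU : ContDiff ℝ 3 U) (m : ℝ) (hm : m ∈ Set.Ioc (1 : ℝ) 2)
    (A₁ : ℝ) (hA₁ : 0 ≤ A₁)
    (hD2 : ∀ q : E, ‖iteratedFDeriv ℝ 2 U q‖ ≤ A₁ * (1 + ‖q‖) ^ (m - 2)) :
    ∃ K > (0 : ℝ), ∀ q : E, 1 ≤ ‖q‖ → ‖gradient U q‖ ≤ K * ‖q‖ ^ (m - 1) := by
  obtain ⟨hm1, hm2⟩ := hm
  obtain ⟨c, hc_def⟩ : ∃ c : ℝ, c = (2 : ℝ) ^ (m - 1) := ⟨_, rfl⟩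
  have hc : 1 < c := hc_def ▸ (Real.one_lt_rpow_iff_of_pos (by norm_num) |>.mpr
    (Or.inl ⟨by norm_num, by linarith⟩))
  obtain ⟨K, hK_def⟩ : ∃ K : ℝ, K = ‖gradient U 0‖ + 2 * A₁ + A₁ / (c - 1) + 1 := ⟨_, rfl⟩
  have hKA : (0:ℝ) ≤ A₁ / (c - 1) := div_nonneg hA₁ (by linarith)
  have hK0 : 0 < K := by
    have := norm_nonneg (gradient U 0); rw [hK_def]; linarith
  -- global bound A₁ on the second derivative
  have hD2' : ∀ w : E, ‖iteratedFDeriv ℝ 2 U w‖ ≤ A₁ := by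
    intro w
    refine (hD2 w).trans ?_
    have h1 : (1 + ‖w‖ : ℝ) ^ (m - 2) ≤ 1 :=
      Real.rpow_le_one_of_one_le_of_nonpos (by linarith [norm_nonneg w]) (by linarith)
    nlinarith [norm_nonneg w]
  -- base : all q with ‖q‖ ≤ 2
  have base : ∀ q : E, ‖q‖ ≤ 2 → ‖gradient U q‖ ≤ K := by
    intro q hq
    have hlip := grad_lip U hU (convex_univ) (fun w _ => hD2' w)
      (Set.mem_univ q) (Set.mem_univ (0 : E))
    have h0 : ‖gradient U q‖ ≤ ‖gradient U q - gradient U 0‖ + ‖gradient U 0‖ := by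
      simpa using norm_add_le (gradient U q - gradient U 0) (gradient U 0)
    simp only [sub_zero] at hlip
    have h9 : A₁ * ‖q‖ ≤ 2 * A₁ := by nlinarith
    rw [hK_def]; linarith
  have hone : ∀ q : E, (1 : ℝ) ≤ (max 1 ‖q‖) ^ (m - 1) :=
    fun q => Real.one_le_rpow (le_max_left _ _) (by linarith)
  have main : ∀ n : ℕ, ∀ q : E, ‖q‖ ≤ 2 ^ n →
      ‖gradient U q‖ ≤ K * (max 1 ‖q‖) ^ (m - 1) := by
    intro n
    induction n with
    | zero =>
      intro q hq
      calc ‖gradient U q‖ ≤ K := base q (by norm_num at hq; linarith)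
        _ = K * 1 := (mul_one K).symm
        _ ≤ K * (max 1 ‖q‖) ^ (m - 1) := mul_le_mul_of_nonneg_left (hone q) hK0.le
    | succ n IH =>
      intro q hq
      by_cases h1 : ‖q‖ ≤ 2 ^ n
      · exact IH q h1
      by_cases h2 : ‖q‖ ≤ 2
      · calc ‖gradient U q‖ ≤ K := base q h2
          _ = K * 1 := (mul_one K).symm
          _ ≤ K * (max 1 ‖q‖) ^ (m - 1) := mul_le_mul_of_nonneg_left (hone q) hK0.le
      push_neg at h1 h2
      have hqpos : (0 : ℝ) < ‖q‖ := by linarith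
      set q' : E := (2⁻¹ : ℝ) • q with hq'_def
      have hq'norm : ‖q'‖ = ‖q‖ / 2 := by
        rw [hq'_def, norm_smul]; simp [abs_of_nonneg]; ring
      have hq'le : ‖q'‖ ≤ 2 ^ n := by
        rw [hq'norm]; rw [pow_succ] at hq; linarith
      have hq'gt : 1 < ‖q'‖ := by rw [hq'norm]; linarith
      have IH' := IH q' hq'le
      rw [max_eq_right hq'gt.le, hq'norm] at IH'
      have hseg : ∀ w ∈ segment ℝ q' q, ‖q‖ / 2 ≤ ‖w‖ := by
        intro w hw
        obtain ⟨a, b, ha, hb, hab, hw⟩ := hw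
        have hwq : w = (a / 2 + b) • q := by
          rw [← hw, hq'_def]; module
        have h4 : (1 : ℝ) / 2 ≤ a / 2 + b := by linarith
        rw [hwq, norm_smul, Real.norm_eq_abs, abs_of_nonneg (by linarith)]
        nlinarith
      have hC : ∀ w ∈ segment ℝ q' q,
          ‖iteratedFDeriv ℝ 2 U w‖ ≤ A₁ * (‖q‖ / 2) ^ (m - 2) := by
        intro w hw
        refine (hD2 w).trans ?_
        have h6 : ‖q‖ / 2 ≤ 1 + ‖w‖ := by
          have := hseg w hw; linarith [norm_nonneg w]
        have := Real.rpow_le_rpow_of_nonpos (by linarith : (0:ℝ) < ‖q‖ / 2) h6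
          (by linarith : m - 2 ≤ 0)
        exact mul_le_mul_of_nonneg_left this hA₁
      have hlip := grad_lip U hU (convex_segment q' q) hC
        (right_mem_segment ℝ q' q) (left_mem_segment ℝ q' q)
      have hqq' : ‖q - q'‖ = ‖q‖ / 2 := by
        have hd : q - q' = (2⁻¹ : ℝ) • q := by rw [hq'_def]; module
        rw [hd, norm_smul]; simp [abs_of_nonneg]; ring
      rw [hqq'] at hlip
      have hhalfpos : (0 : ℝ) < ‖q‖ / 2 := by linarith
      have hstep : A₁ * (‖q‖ / 2) ^ (m - 2) * (‖q‖ / 2) = A₁ * (‖q‖ / 2) ^ (m - 1) := by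
        rw [show m - 1 = (m - 2) + 1 by ring, Real.rpow_add hhalfpos, Real.rpow_one]
        ring
      rw [hstep] at hlip
      have htri : ‖gradient U q‖ ≤ ‖gradient U q - gradient U q'‖ + ‖gradient U q'‖ := by
        simpa using norm_add_le (gradient U q - gradient U q') (gradient U q')
      have hdiv : (‖q‖ / 2) ^ (m - 1) = ‖q‖ ^ (m - 1) / c := by
        rw [hc_def, Real.div_rpow (norm_nonneg q) (by norm_num)]
      have hsum : ‖gradient U q‖ ≤ (K + A₁) * (‖q‖ ^ (m - 1) / c) := by
        rw [← hdiv]; nlinarith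
      have hKc : K + A₁ ≤ K * c := by
        have h7 : A₁ / (c - 1) * (c - 1) = A₁ := div_mul_cancel₀ A₁ (by linarith)
        have h8 : A₁ / (c - 1) * (c - 1) ≤ K * (c - 1) := by
          have : (0:ℝ) ≤ c - 1 := by linarith
          nlinarith [norm_nonneg (gradient U 0)]
        rw [h7] at h8; linarith
      rw [max_eq_right (by linarith : (1:ℝ) ≤ ‖q‖)]
      have hX : (0:ℝ) ≤ ‖q‖ ^ (m - 1) := Real.rpow_nonneg (norm_nonneg q) _
      have hc0 : (0:ℝ) < c := by linarith
      calc ‖gradient U q‖ ≤ (K + A₁) * (‖q‖ ^ (m - 1) / c) := hsum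
        _ ≤ (K * c) * (‖q‖ ^ (m - 1) / c) :=
            mul_le_mul_of_nonneg_right hKc (div_nonneg hX hc0.le)
        _ = K * ‖q‖ ^ (m - 1) := by
            rw [mul_assoc, ← mul_div_assoc, mul_div_cancel_left₀ _ hc0.ne']
  refine ⟨K, hK0, fun q hq => ?_⟩
  have hn : ‖q‖ ≤ 2 ^ (⌈‖q‖⌉₊) := by
    refine (Nat.le_ceil _).trans ?_
    exact_mod_cast (Nat.lt_two_pow_self (n := ⌈‖q‖⌉₊)).le
  have := main ⌈‖q‖⌉₊ q hn
  rwa [max_eq_right hq] at this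

set_option maxHeartbeats 1000000 in
theorem hessian_gradient_lower_bound' {d : ℕ}
    (U : EuclideanSpace ℝ (Fin d) → ℝ) (m : ℝ) (hm : m ∈ Set.Ioc (1 : ℝ) 2)
    (hU : ContDiff ℝ 3 U)
    (A₁ : ℝ) (hA₁ : 0 ≤ A₁)
    (hD : ∀ q : EuclideanSpace ℝ (Fin d),
      ‖iteratedFDeriv ℝ 2 U q‖ ≤ A₁ * (1 + ‖q‖) ^ (m - 2) ∧
      ‖iteratedFDeriv ℝ 3 U q‖ ≤ A₁ * (1 + ‖q‖) ^ (m - 3))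
    (A₂ : ℝ) (hA₂ : 0 < A₂) (R : ℝ) (hR : 0 ≤ R)
    (hhess : ∀ q : EuclideanSpace ℝ (Fin d), R ≤ ‖q‖ →
      A₂ * ‖q‖ ^ (3 * m - 4) ≤
        iteratedFDeriv ℝ 2 U q ![gradient U q, gradient U q]) :
    ∃ R₀ ≥ (0 : ℝ), ∃ δ > (0 : ℝ), ∃ η > (0 : ℝ),
      ∀ q x z : EuclideanSpace ℝ (Fin d), R₀ ≤ ‖q‖ →
        max ‖q - x‖ ‖q - z‖ ≤ δ * ‖q‖ →
        η * ‖q‖ ^ (3 * m - 4) ≤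
          iteratedFDeriv ℝ 2 U q ![gradient U x, gradient U z] := by
  obtain ⟨hm1, hm2⟩ := hm
  obtain ⟨K, hK0, hK⟩ := grad_growth U hU m ⟨hm1, hm2⟩ A₁ hA₁ (fun q => (hD q).1)
  obtain ⟨L, hL_def⟩ : ∃ L : ℝ, L = 4 * A₁ ^ 2 * K + 4 * A₁ ^ 3 + 1 := ⟨_, rfl⟩
  have hL0 : 0 < L := by
    rw [hL_def]
    nlinarith [mul_nonneg (mul_nonneg (by norm_num : (0:ℝ) ≤ 4) (sq_nonneg A₁)) hK0.le,
      pow_nonneg hA₁ 3]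
  obtain ⟨δ, hδ_def⟩ : ∃ δ : ℝ, δ = min (1/2) (A₂ / (2 * L)) := ⟨_, rfl⟩
  have hδ0 : 0 < δ := hδ_def ▸ lt_min (by norm_num) (by positivity)
  have hδhalf : δ ≤ 1/2 := hδ_def ▸ min_le_left _ _
  have hδL : L * δ ≤ A₂ / 2 := by
    have h1 : δ ≤ A₂ / (2 * L) := hδ_def ▸ min_le_right _ _
    have h2 : L * δ ≤ L * (A₂ / (2 * L)) := mul_le_mul_of_nonneg_left h1 hL0.le
    have h3 : L * (A₂ / (2 * L)) = A₂ / 2 := by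
      field_simp
    linarith
  refine ⟨max R 2, le_trans (by norm_num) (le_max_right R 2),
    δ, hδ0, A₂ / 2, by positivity, fun q x z hq hxz => ?_⟩
  have hq2 : (2:ℝ) ≤ ‖q‖ := le_trans (le_max_right R 2) hq
  have hqR : R ≤ ‖q‖ := le_trans (le_max_left R 2) hq
  have hq1 : (1:ℝ) ≤ ‖q‖ := by linarith
  have hqpos : (0:ℝ) < ‖q‖ := by linarith
  have hx : ‖q - x‖ ≤ δ * ‖q‖ := le_trans (le_max_left _ _) hxz
  have hz : ‖q - z‖ ≤ δ * ‖q‖ := le_trans (le_max_right _ _) hxz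
  -- difference bound for gradients at points near q
  have hdiffb : ∀ y : EuclideanSpace ℝ (Fin d), ‖q - y‖ ≤ δ * ‖q‖ →
      ‖gradient U y - gradient U q‖ ≤ 2 * A₁ * δ * ‖q‖ ^ (m - 1) := by
    intro y hy
    have hC : ∀ w ∈ segment ℝ q y,
        ‖iteratedFDeriv ℝ 2 U w‖ ≤ 2 * A₁ * ‖q‖ ^ (m - 2) := by
      intro w hw
      obtain ⟨a, b, ha, hb, hab, hw⟩ := hw
      have hwq : w - q = b • (y - q) := by
        rw [← hw, show a = 1 - b from by linarith]; module
      have hwqn : ‖w - q‖ ≤ δ * ‖q‖ := by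
        rw [hwq, norm_smul, Real.norm_eq_abs, abs_of_nonneg hb]
        have : ‖y - q‖ ≤ δ * ‖q‖ := by rw [norm_sub_rev]; exact hy
        nlinarith [norm_nonneg (y - q)]
      have hwlow : ‖q‖ / 2 ≤ ‖w‖ := by
        have h4 : ‖q‖ - ‖w‖ ≤ ‖q - w‖ := norm_sub_norm_le q w
        rw [norm_sub_rev] at h4
        nlinarith
      refine ((hD w).1).trans ?_
      have h5 : (1 + ‖w‖ : ℝ) ^ (m - 2) ≤ (‖q‖ / 2) ^ (m - 2) :=
        Real.rpow_le_rpow_of_nonpos (by linarith) (by linarith [norm_nonneg w])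
          (by linarith)
      have h6 : (‖q‖ / 2 : ℝ) ^ (m - 2) ≤ 2 * ‖q‖ ^ (m - 2) := by
        rw [Real.div_rpow (norm_nonneg q) (by norm_num)]
        have h7 : (1/2 : ℝ) ≤ (2:ℝ) ^ (m - 2) := by
          have h := Real.rpow_le_rpow_of_exponent_le (by norm_num : (1:ℝ) ≤ 2)
            (by linarith : (-1:ℝ) ≤ m - 2)
          rw [Real.rpow_neg_one] at h
          linarith
        have h8 : ‖q‖ ^ (m - 2) / (2:ℝ) ^ (m - 2) ≤ ‖q‖ ^ (m - 2) / (1/2) := by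
          apply div_le_div_of_nonneg_left (Real.rpow_nonneg (norm_nonneg q) _)
            (by norm_num) h7
        calc ‖q‖ ^ (m - 2) / (2:ℝ) ^ (m - 2) ≤ ‖q‖ ^ (m - 2) / (1/2) := h8
          _ = 2 * ‖q‖ ^ (m - 2) := by ring
      calc A₁ * (1 + ‖w‖) ^ (m - 2) ≤ A₁ * (‖q‖ / 2) ^ (m - 2) :=
            mul_le_mul_of_nonneg_left h5 hA₁
        _ ≤ A₁ * (2 * ‖q‖ ^ (m - 2)) := mul_le_mul_of_nonneg_left h6 hA₁
        _ = 2 * A₁ * ‖q‖ ^ (m - 2) := by ring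
    have hlip := grad_lip U hU (convex_segment q y) hC
      (right_mem_segment ℝ q y) (left_mem_segment ℝ q y)
    have h9 : ‖y - q‖ ≤ δ * ‖q‖ := by rw [norm_sub_rev]; exact hy
    have h10 : ‖q‖ ^ (m - 2) * ‖q‖ = ‖q‖ ^ (m - 1) := by
      rw [show m - 1 = (m - 2) + 1 by ring, Real.rpow_add hqpos, Real.rpow_one]
    calc ‖gradient U y - gradient U q‖ ≤ 2 * A₁ * ‖q‖ ^ (m - 2) * ‖y - q‖ := hlip
      _ ≤ 2 * A₁ * ‖q‖ ^ (m - 2) * (δ * ‖q‖) := by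
          apply mul_le_mul_of_nonneg_left h9
          positivity
      _ = 2 * A₁ * δ * (‖q‖ ^ (m - 2) * ‖q‖) := by ring
      _ = 2 * A₁ * δ * ‖q‖ ^ (m - 1) := by rw [h10]
  -- notation
  obtain ⟨B, hB_def⟩ : ∃ B, B = iteratedFDeriv ℝ 2 U q := ⟨_, rfl⟩
  obtain ⟨g, hg_def⟩ : ∃ g, g = gradient U q := ⟨_, rfl⟩
  obtain ⟨u, hu_def⟩ : ∃ u, u = gradient U x - g := ⟨_, rfl⟩
  obtain ⟨v, hv_def⟩ : ∃ v, v = gradient U z - g := ⟨_, rfl⟩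
  have hgx : gradient U x = g + u := by rw [hu_def]; abel
  have hgz : gradient U z = g + v := by rw [hv_def]; abel
  have hexp : iteratedFDeriv ℝ 2 U q ![gradient U x, gradient U z]
      = B ![g, g] + B ![g, v] + B ![u, g] + B ![u, v] := by
    rw [← hB_def, hgx, hgz]; exact bilin_expand B g u v
  have hBn : ‖B‖ ≤ A₁ * ‖q‖ ^ (m - 2) := by
    rw [hB_def]
    refine ((hD q).1).trans ?_
    have := Real.rpow_le_rpow_of_nonpos hqpos (by linarith [norm_nonneg q] : ‖q‖ ≤ 1 + ‖q‖)
      (by linarith : m - 2 ≤ 0)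
    exact mul_le_mul_of_nonneg_left this hA₁
  have hgn : ‖g‖ ≤ K * ‖q‖ ^ (m - 1) := by rw [hg_def]; exact hK q hq1
  have hun : ‖u‖ ≤ 2 * A₁ * δ * ‖q‖ ^ (m - 1) := by
    rw [hu_def, hg_def]; exact hdiffb x hx
  have hvn : ‖v‖ ≤ 2 * A₁ * δ * ‖q‖ ^ (m - 1) := by
    rw [hv_def, hg_def]; exact hdiffb z hz
  have hPQ : ‖q‖ ^ (m - 2) * (‖q‖ ^ (m - 1) * ‖q‖ ^ (m - 1)) = ‖q‖ ^ (3 * m - 4) := by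
    rw [← Real.rpow_add hqpos, ← Real.rpow_add hqpos]
    ring_nf
  have hS0 : (0:ℝ) ≤ ‖q‖ ^ (3 * m - 4) := Real.rpow_nonneg (norm_nonneg q) _
  -- error bounds
  have he : ∀ a b : EuclideanSpace ℝ (Fin d), ∀ Ca Cb : ℝ, 0 ≤ Ca → 0 ≤ Cb →
      ‖a‖ ≤ Ca * ‖q‖ ^ (m - 1) → ‖b‖ ≤ Cb * ‖q‖ ^ (m - 1) →
      |B ![a, b]| ≤ A₁ * Ca * Cb * ‖q‖ ^ (3 * m - 4) := by
    intro a b Ca Cb hCa hCb hla hlb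
    have h1 := bilin_bound B a b
    have h2 : ‖a‖ * ‖b‖ ≤ (Ca * ‖q‖ ^ (m - 1)) * (Cb * ‖q‖ ^ (m - 1)) :=
      mul_le_mul hla hlb (norm_nonneg b) (by positivity)
    have h3 : ‖B‖ * (‖a‖ * ‖b‖) ≤ (A₁ * ‖q‖ ^ (m - 2)) *
        ((Ca * ‖q‖ ^ (m - 1)) * (Cb * ‖q‖ ^ (m - 1))) :=
      mul_le_mul hBn h2 (by positivity) (by positivity)
    have h4 : (A₁ * ‖q‖ ^ (m - 2)) * ((Ca * ‖q‖ ^ (m - 1)) * (Cb * ‖q‖ ^ (m - 1)))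
        = A₁ * Ca * Cb * ‖q‖ ^ (3 * m - 4) := by
      rw [← hPQ]; ring
    linarith
  have hCδ : (0:ℝ) ≤ 2 * A₁ * δ := by positivity
  have e1 := he g v K (2 * A₁ * δ) hK0.le hCδ hgn hvn
  have e2 := he u g (2 * A₁ * δ) K hCδ hK0.le hun hgn
  have e3 := he u v (2 * A₁ * δ) (2 * A₁ * δ) hCδ hCδ hun hvn
  have hmain : A₂ * ‖q‖ ^ (3 * m - 4) ≤ B ![g, g] := by
    rw [hB_def, hg_def]; exact hhess q hqR
  -- coefficient bound
  have hcoef : A₁ * K * (2 * A₁ * δ) + A₁ * (2 * A₁ * δ) * K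
      + A₁ * (2 * A₁ * δ) * (2 * A₁ * δ) ≤ A₂ / 2 := by
    have hLδ : (4 * A₁ ^ 2 * K + 4 * A₁ ^ 3 + 1) * δ ≤ A₂ / 2 := by
      rw [← hL_def]; exact hδL
    have hd2 : A₁ ^ 3 * (δ * δ) ≤ A₁ ^ 3 * (δ * 1) :=
      mul_le_mul_of_nonneg_left
        (mul_le_mul_of_nonneg_left (by linarith) hδ0.le) (pow_nonneg hA₁ 3)
    nlinarith [hd2, hLδ, hδ0.le]
  have hcoefS : (A₁ * K * (2 * A₁ * δ) + A₁ * (2 * A₁ * δ) * K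
      + A₁ * (2 * A₁ * δ) * (2 * A₁ * δ)) * ‖q‖ ^ (3 * m - 4)
        ≤ (A₂ / 2) * ‖q‖ ^ (3 * m - 4) :=
    mul_le_mul_of_nonneg_right hcoef hS0
  have f1 : -(A₁ * K * (2 * A₁ * δ) * ‖q‖ ^ (3 * m - 4)) ≤ B ![g, v] := by
    have := neg_abs_le (B ![g, v]); linarith
  have f2 : -(A₁ * (2 * A₁ * δ) * K * ‖q‖ ^ (3 * m - 4)) ≤ B ![u, g] := by
    have := neg_abs_le (B ![u, g]); linarith
  have f3 : -(A₁ * (2 * A₁ * δ) * (2 * A₁ * δ) * ‖q‖ ^ (3 * m - 4)) ≤ B ![u, v] := by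
    have := neg_abs_le (B ![u, v]); linarith
  rw [hexp]
  linarith [hmain, f1, f2, f3, hcoefS]

/-- under A2(m)(i)–(ii) (together with A2(m)(iii), which the proof uses),
the curvature lower bound `D²U(q){∇U(x) ⊗ ∇U(z)} ≥ η‖q‖^{3m−4}` holds whenever `x` and
`z` are within a small relative distance of `q` and `‖q‖` is large. -/
theorem hessian_gradient_lower_bound {d : ℕ}
    (U : EuclideanSpace ℝ (Fin d) → ℝ) (m : ℝ) (hm : m ∈ Set.Ioc (1 : ℝ) 2)
    (hU : ContDiff ℝ 3 U)
    (A₁ : ℝ) (hA₁ : 0 ≤ A₁)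
    (hD : ∀ q : EuclideanSpace ℝ (Fin d),
      ‖iteratedFDeriv ℝ 2 U q‖ ≤ A₁ * (1 + ‖q‖) ^ (m - 2) ∧
      ‖iteratedFDeriv ℝ 3 U q‖ ≤ A₁ * (1 + ‖q‖) ^ (m - 3))
    (A₂ : ℝ) (hA₂ : 0 < A₂) (R : ℝ) (hR : 0 ≤ R)
    (hhess : ∀ q : EuclideanSpace ℝ (Fin d), R ≤ ‖q‖ →
      A₂ * ‖q‖ ^ (3 * m - 4) ≤
        iteratedFDeriv ℝ 2 U q ![gradient U q, gradient U q])
    (A₃ : ℝ) (hA₃ : 0 < A₃) (A₄ : ℝ)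
    (hinner : ∀ q : EuclideanSpace ℝ (Fin d), A₃ * ‖q‖ ^ m - A₄ ≤ ⟪gradient U q, q⟫) :
    ∃ R₀ ≥ (0 : ℝ), ∃ δ > (0 : ℝ), ∃ η > (0 : ℝ),
      ∀ q x z : EuclideanSpace ℝ (Fin d), R₀ ≤ ‖q‖ →
        max ‖q - x‖ ‖q - z‖ ≤ δ * ‖q‖ →
        η * ‖q‖ ^ (3 * m - 4) ≤
          iteratedFDeriv ℝ 2 U q ![gradient U x, gradient U z] := by
  exact hessian_gradient_lower_bound' U m hm hU A₁ hA₁ hD A₂ hA₂ R hR hhess
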